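/- Let p and q be coprime positive integers. Then ‖B(p,q) − (p,q)‖² + ‖B(q,p)‖² does not exceed 2·(p²+q²); moreover ‖B(p,q) − (p,q)‖ = ‖B(q,p)‖ ≤ ‖(p,q)‖. -/

import Mathlib

/-- The point (x,y) in the Euclidean plane. -/
noncomputable def V (x y : ℝ) : EuclideanSpace ℝ (Fin 2) := WithLp.toLp 2 ![x, y]

lemma norm_V (x y : ℝ) : ‖V x y‖ = Real.sqrt (x ^ 2 + y ^ 2) := by
  rw [EuclideanSpace.norm_eq]
  simp [V, Fin.sum_univ_two, sq_abs]

lemma V_sub (x y u v : ℝ) : V x y - V u v = V (x - u) (y - v) := by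
  ext i
  fin_cases i <;> simp [V]

/-- ‖B(p,q) − (p,q)‖² + ‖B(q,p)‖² ≤ 2(p²+q²), and moreover
‖B(p,q) − (p,q)‖ = ‖B(q,p)‖ ≤ ‖(p,q)‖. Here (a,b) = B(p,q), (c,d) = B(q,p). -/
theorem bezout_norm_bounds (p q a b c d : ℤ) (hp : 0 < p) (hq : 0 < q)
    (hpq : IsCoprime p q)
    (ha : 0 < a) (hap : a ≤ p) (hb : 0 ≤ b) (hbq : b < q)
    (hbez : a * q - b * p = 1)
    (hc : 0 < c) (hcq : c ≤ q) (hd : 0 ≤ d) (hdp : d < p)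
    (hbez' : c * p - d * q = 1) :
    ‖V (a : ℝ) (b : ℝ) - V (p : ℝ) (q : ℝ)‖ ^ 2 + ‖V (c : ℝ) (d : ℝ)‖ ^ 2
        ≤ 2 * ((p : ℝ) ^ 2 + (q : ℝ) ^ 2) ∧
      ‖V (a : ℝ) (b : ℝ) - V (p : ℝ) (q : ℝ)‖ = ‖V (c : ℝ) (d : ℝ)‖ ∧
      ‖V (c : ℝ) (d : ℝ)‖ ≤ ‖V (p : ℝ) (q : ℝ)‖ := by
  -- First show a = p - d and b = q - c.
  have hkey : (a - (p - d)) * q = (b - (q - c)) * p := by linarith [hbez, hbez']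
  have hpd : p ∣ (a - (p - d)) := by
    have := hpq
    have h1 : p ∣ (a - (p - d)) * q := ⟨b - (q - c), by linarith [hkey]⟩
    exact hpq.dvd_of_dvd_mul_right h1
  have had : a - (p - d) = 0 := by
    rcases hpd with ⟨k, hk⟩
    have hbound : -p < a - (p - d) ∧ a - (p - d) < p := by constructor <;> linarith
    have hk0 : k = 0 := by nlinarith [hbound.1, hbound.2]
    simp [hk, hk0]
  have haeq : a = p - d := by linarith
  have hbeq : b = q - c := by
    have hq0 : q ≠ 0 := hq.ne'
    have : (b - (q - c)) * p = 0 := by rw [← hkey, had]; ring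
    have hp0 : p ≠ 0 := hp.ne'
    rcases mul_eq_zero.mp this with h | h
    · linarith
    · exact absurd h hp0
  -- Now pass to reals
  have hsub : V (a : ℝ) (b : ℝ) - V (p : ℝ) (q : ℝ) = V (-(d : ℝ)) (-(c : ℝ)) := by
    rw [V_sub]
    congr 1 <;> push_cast [haeq, hbeq] <;> ring
  have hcr : (0 : ℝ) < c := by exact_mod_cast hc
  have hdr : (0 : ℝ) ≤ d := by exact_mod_cast hd
  have hcq' : (c : ℝ) ≤ q := by exact_mod_cast hcq
  have hdp' : (d : ℝ) ≤ p := by exact_mod_cast hdp.le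
  have hnorm1 : ‖V (a : ℝ) (b : ℝ) - V (p : ℝ) (q : ℝ)‖ = ‖V (c : ℝ) (d : ℝ)‖ := by
    rw [hsub, norm_V, norm_V]
    ring_nf
  have hsq : ∀ x y : ℝ, 0 ≤ x → 0 ≤ y → ‖V x y‖ ^ 2 = x ^ 2 + y ^ 2 := by
    intro x y hx hy
    rw [norm_V, Real.sq_sqrt (by positivity)]
  have hcd : ‖V (c : ℝ) (d : ℝ)‖ ^ 2 = (c : ℝ) ^ 2 + (d : ℝ) ^ 2 :=
    hsq _ _ hcr.le hdr
  refine ⟨?_, hnorm1, ?_⟩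
  · rw [hnorm1, hcd]
    nlinarith
  · rw [norm_V, norm_V]
    apply Real.sqrt_le_sqrt
    nlinarith
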